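/- For every y ∈ ℝ^F, the unique minimizer of r ↦ (1/2)‖y − r‖₂² + λ‖r‖₁ over {r ∈ ℝ^F : ‖r‖_∞ ≤ M} is S̃_{λ,M}(y), defined entrywise by: (S̃_{λ,M}(y))_i = 0 if |y_i| < λ; (S̃_{λ,M}(y))_i = y_i − sign(y_i)·λ if λ ≤ |y_i| ≤ λ + M; and (S̃_{λ,M}(y))_i = sign(y_i)·M if |y_i| > λ + M. -/

import Mathlib

noncomputable section

/-- 1D key lemma: properties of the scalar truncated soft-threshold. -/
lemma oneD (lam M a : ℝ) (hlam : 0 < lam) (hM : 0 < M) :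
    |(if |a| < lam then (0:ℝ) else if |a| ≤ lam + M then a - Real.sign a * lam
        else Real.sign a * M)| ≤ M ∧
    ∀ t : ℝ, |t| ≤ M →
      (1/2)*(a - (if |a| < lam then (0:ℝ) else if |a| ≤ lam + M then a - Real.sign a * lam
        else Real.sign a * M))^2
      + lam*|(if |a| < lam then (0:ℝ) else if |a| ≤ lam + M then a - Real.sign a * lam
        else Real.sign a * M)|
      + (1/2)*(t - (if |a| < lam then (0:ℝ) else if |a| ≤ lam + M then a - Real.sign a * lam
        else Real.sign a * M))^2
      ≤ (1/2)*(a - t)^2 + lam*|t| := by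
  split_ifs with h1 h2
  · refine ⟨by simpa using hM.le, fun t ht => ?_⟩
    have h3 : a * t ≤ |a| * |t| := le_trans (le_abs_self _) (abs_mul a t).le
    have h4 : (0:ℝ) ≤ |t| := abs_nonneg t
    have h5 : |a| * |t| ≤ lam * |t| := mul_le_mul_of_nonneg_right h1.le h4
    simp only [abs_zero]
    nlinarith
  · -- lam ≤ |a| ≤ lam + M
    push_neg at h1
    rcases lt_trichotomy a 0 with ha | ha | ha
    · rw [Real.sign_of_neg ha]
      have haa : |a| = -a := abs_of_neg ha
      have hs : a - (-1) * lam ≤ 0 := by rw [haa] at h1; linarith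
      have hsa : |a - (-1)*lam| = -(a - (-1)*lam) := abs_of_nonpos hs
      constructor
      · rw [hsa]; rw [haa] at h2; linarith [abs_nonneg (a - (-1)*lam), hlam]
      · intro t ht
        have h5 : -t ≤ |t| := neg_le_abs t
        rw [hsa]; nlinarith
    · exfalso; simp [ha] at h1; linarith
    · rw [Real.sign_of_pos ha]
      have haa : |a| = a := abs_of_pos ha
      have hs : (0:ℝ) ≤ a - 1 * lam := by rw [haa] at h1; linarith
      have hsa : |a - 1*lam| = a - 1*lam := abs_of_nonneg hs
      constructor
      · rw [hsa]; rw [haa] at h2; linarith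
      · intro t ht
        have h5 : t ≤ |t| := le_abs_self t
        rw [hsa]; nlinarith
  · -- |a| > lam + M
    push_neg at h1 h2
    rcases lt_trichotomy a 0 with ha | ha | ha
    · rw [Real.sign_of_neg ha]
      have haa : |a| = -a := abs_of_neg ha
      have hsa : |(-1:ℝ)*M| = M := by rw [abs_of_nonpos (by nlinarith)]; ring
      refine ⟨le_of_eq hsa, fun t ht => ?_⟩
      rw [hsa]
      have h5 : -t ≤ |t| := neg_le_abs t
      have h6 : -M ≤ t := (abs_le.mp ht).1
      rw [haa] at h2
      nlinarith
    · exfalso; simp [ha] at h2; linarith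
    · rw [Real.sign_of_pos ha]
      have haa : |a| = a := abs_of_pos ha
      have hsa : |(1:ℝ)*M| = M := by rw [abs_of_nonneg (by nlinarith)]; ring
      refine ⟨le_of_eq hsa, fun t ht => ?_⟩
      rw [hsa]
      have h5 : t ≤ |t| := le_abs_self t
      have h6 : t ≤ M := (abs_le.mp ht).2
      rw [haa] at h2
      nlinarith

/-- The truncated soft-thresholding operator `S̃_{λ,M}`, applied entrywise:
`(S̃_{λ,M}(y))_i = 0` if `|y_i| < λ`; `y_i − sign(y_i)·λ` if `λ ≤ |y_i| ≤ λ + M`;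
and `sign(y_i)·M` if `|y_i| > λ + M`. -/
def truncSoftThresh (lam M : ℝ) {F : ℕ} (y : EuclideanSpace ℝ (Fin F)) :
    EuclideanSpace ℝ (Fin F) :=
  (WithLp.equiv 2 _).symm (fun i =>
    if |y i| < lam then 0
    else if |y i| ≤ lam + M then y i - Real.sign (y i) * lam
    else Real.sign (y i) * M)

/-- Lemma S-3: for every `y ∈ ℝ^F`, the unique minimizer of
`r ↦ (1/2)‖y − r‖₂² + λ‖r‖₁` over `{r : ‖r‖_∞ ≤ M}` is `S̃_{λ,M}(y)`. -/
theorem truncated_soft_thresholding_is_prox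
    (F : ℕ) (hF : 1 ≤ F) (lam M : ℝ) (hlam : 0 < lam) (hM : 0 < M)
    (y : EuclideanSpace ℝ (Fin F)) :
    (∀ i, |truncSoftThresh lam M y i| ≤ M) ∧
    (∀ r : EuclideanSpace ℝ (Fin F), (∀ i, |r i| ≤ M) →
      (1/2) * ‖y - truncSoftThresh lam M y‖ ^ 2 + lam * ∑ i, |truncSoftThresh lam M y i|
        ≤ (1/2) * ‖y - r‖ ^ 2 + lam * ∑ i, |r i|) ∧
    (∀ r : EuclideanSpace ℝ (Fin F), (∀ i, |r i| ≤ M) →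
      (1/2) * ‖y - r‖ ^ 2 + lam * ∑ i, |r i|
        = (1/2) * ‖y - truncSoftThresh lam M y‖ ^ 2 + lam * ∑ i, |truncSoftThresh lam M y i| →
      r = truncSoftThresh lam M y) := by
  set s := truncSoftThresh lam M y with hs
  have happ : ∀ i, s i = if |y i| < lam then (0:ℝ)
      else if |y i| ≤ lam + M then y i - Real.sign (y i) * lam
      else Real.sign (y i) * M := fun i => rfl
  have hbd : ∀ i, |s i| ≤ M := by
    intro i; rw [happ i]; exact (oneD lam M (y i) hlam hM).1
  have hkey : ∀ (r : EuclideanSpace ℝ (Fin F)), (∀ i, |r i| ≤ M) → ∀ i,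
      (1/2)*(y i - s i)^2 + lam*|s i| + (1/2)*(r i - s i)^2
        ≤ (1/2)*(y i - r i)^2 + lam*|r i| := by
    intro r hr i
    have := (oneD lam M (y i) hlam hM).2 (r i) (hr i)
    rw [happ i]; exact this
  have hns : ∀ x : EuclideanSpace ℝ (Fin F), ‖x‖^2 = ∑ i, (x i)^2 := by
    intro x
    rw [EuclideanSpace.norm_eq, Real.sq_sqrt (by positivity)]
    simp [sq_abs]
  have hsub : ∀ (r : EuclideanSpace ℝ (Fin F)) i, (y - r) i = y i - r i := fun r i => rfl
  have hG : ∀ r : EuclideanSpace ℝ (Fin F),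
      (1/2) * ‖y - r‖ ^ 2 + lam * ∑ i, |r i|
        = ∑ i, ((1/2)*(y i - r i)^2 + lam*|r i|) := by
    intro r
    rw [hns]
    simp only [hsub, Finset.mul_sum, Finset.sum_add_distrib]
  refine ⟨hbd, ?_, ?_⟩
  · intro r hr
    rw [hG, hG]
    refine Finset.sum_le_sum fun i _ => ?_
    have := hkey r hr i
    nlinarith [sq_nonneg (r i - s i)]
  · intro r hr heq
    rw [hG, hG] at heq
    have hsum : ∑ i, ((1/2)*(y i - s i)^2 + lam*|s i| + (1/2)*(r i - s i)^2)
        ≤ ∑ i, ((1/2)*(y i - r i)^2 + lam*|r i|) :=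
      Finset.sum_le_sum fun i _ => hkey r hr i
    rw [Finset.sum_add_distrib, heq] at hsum
    have hz : ∑ i, (1/2)*(r i - s i)^2 ≤ 0 := by linarith
    have hzero : ∀ i ∈ Finset.univ, (1/2)*(r i - s i)^2 = 0 := by
      intro i _
      have h1 : ∀ i ∈ (Finset.univ : Finset (Fin F)), (0:ℝ) ≤ (1/2)*(r i - s i)^2 :=
        fun i _ => by positivity
      have := (Finset.sum_eq_zero_iff_of_nonneg h1).mp (le_antisymm hz (Finset.sum_nonneg h1))
      exact this i (Finset.mem_univ i)
    refine PiLp.ext fun i => ?_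
    have := hzero i (Finset.mem_univ i)
    have : (r i - s i)^2 = 0 := by linarith
    have := pow_eq_zero_iff (n := 2) (by norm_num) |>.mp this
    linarith
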